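/- Let φ₁, φ₂ : [0,∞) → [0,∞) be continuous strictly increasing with φᵢ(0)=0, φᵢ(1)=1, α, β > 0 with α+β ≥ 1, and suppose F₁(t)=φ₁(t^{-1/n}) and F₂(t)=φ₂(t^{-1/n}) are both convex. Let K, L be star bodies in ℝⁿ and K +̃_φ L the star body with radial function ρ satisfying α φ₁(ρ(u)/ρ_K(u)) + β φ₂(ρ(u)/ρ_L(u)) = 1 for all u ∈ S^{n-1}. Then α φ₁((|K +̃_φ L|/|K|)^{1/n}) + β φ₂((|K +̃_φ L|/|L|)^{1/n}) ≤ 1. -/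

import Mathlib

/-- The class `Φ̃₂`: continuous on `[0,∞)²`, strictly increasing in each variable,
with `φ(0,0) = 0` and `φ(1,0) = φ(0,1) = 1`. -/
def IsPhi2 (φ : ℝ → ℝ → ℝ) : Prop :=
  ContinuousOn (fun p : ℝ × ℝ => φ p.1 p.2) (Set.Ici 0 ×ˢ Set.Ici 0) ∧
  (∀ y : ℝ, 0 ≤ y → StrictMonoOn (fun x => φ x y) (Set.Ici 0)) ∧
  (∀ x : ℝ, 0 ≤ x → StrictMonoOn (fun y => φ x y) (Set.Ici 0)) ∧
  φ 0 0 = 0 ∧ φ 1 0 = 1 ∧ φ 0 1 = 1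

noncomputable section

open Metric Set MeasureTheory Filter

/-- A star body about the origin in `ℝⁿ`, represented by its radial function,
which is continuous and positive on the unit sphere. -/
structure StarBody (n : ℕ) where
  ρ : EuclideanSpace ℝ (Fin n) → ℝ
  pos : ∀ u : EuclideanSpace ℝ (Fin n), ‖u‖ = 1 → 0 < ρ u
  cont : ContinuousOn ρ (sphere (0 : EuclideanSpace ℝ (Fin n)) 1)

/-- `M` is the Orlicz `φ`-radial addition `K +̃_φ L`, i.e.
`φ(ρ_M(u)/ρ_K(u), ρ_M(u)/ρ_L(u)) = 1` for all `u` on the unit sphere. -/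
def IsOrliczSum {n : ℕ} (φ : ℝ → ℝ → ℝ) (K L M : StarBody n) : Prop :=
  ∀ u : EuclideanSpace ℝ (Fin n), ‖u‖ = 1 →
    φ (M.ρ u / K.ρ u) (M.ρ u / L.ρ u) = 1

/-- The spherical Lebesgue measure on the unit sphere `S^{n-1}`. -/
def sphereMeasure (n : ℕ) : Measure (sphere (0 : EuclideanSpace ℝ (Fin n)) 1) :=
  (volume : Measure (EuclideanSpace ℝ (Fin n))).toSphere

/-- The volume of a star body via the polar coordinate formula
`|K| = (1/n) ∫_{S^{n-1}} ρ_K(u)ⁿ dσ(u)`. -/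
def StarBody.vol {n : ℕ} (K : StarBody n) : ℝ :=
  (1 / (n : ℝ)) * ∫ u : sphere (0 : EuclideanSpace ℝ (Fin n)) 1,
    (K.ρ u) ^ n ∂(sphereMeasure n)

/-- The class `Φ̃₁`: continuous strictly increasing on `[0,∞)` with
`φ(0) = 0` and `φ(1) = 1`. -/
def IsPhi1 (φ : ℝ → ℝ) : Prop :=
  ContinuousOn φ (Set.Ici 0) ∧ StrictMonoOn φ (Set.Ici 0) ∧ φ 0 = 0 ∧ φ 1 = 1

open scoped NNReal ENNReal


private lemma continuous_integrable {X : Type*} [TopologicalSpace X] [CompactSpace X] [Nonempty X]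
    [MeasurableSpace X] [OpensMeasurableSpace X] (μ : Measure X) [IsFiniteMeasure μ]
    {f : X → ℝ} (hf : Continuous f) : Integrable f μ := by
  obtain ⟨x₀, -, hx₀⟩ := isCompact_univ.exists_isMaxOn univ_nonempty hf.norm.continuousOn
  have hx₀ : ∀ y, ‖f y‖ ≤ ‖f x₀‖ := fun y => hx₀ (mem_univ y)
  exact (integrable_const (‖f x₀‖)).mono' hf.aestronglyMeasurable (Eventually.of_forall hx₀)

private lemma jensen_half {X : Type*} [TopologicalSpace X] [CompactSpace X] [Nonempty X]
    [MeasurableSpace X] [BorelSpace X]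
    (σ : Measure X) [IsFiniteMeasure σ] (hσ : σ ≠ 0)
    {n : ℕ} (hn : 0 < n) {φ : ℝ → ℝ}
    (hφc : ContinuousOn φ (Set.Ici 0))
    (hF : ConvexOn ℝ (Set.Ioi 0) (fun t : ℝ => φ (t ^ (-(1 : ℝ) / n))))
    {ρM ρB : X → ℝ} (cM : Continuous ρM) (cB : Continuous ρB)
    (pM : ∀ u, 0 < ρM u) (pB : ∀ u, 0 < ρB u) :
    φ (((∫ u, ρB u ^ n ∂σ) / (∫ u, ρM u ^ n ∂σ)) ^ (-(1 : ℝ) / n)) ≤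
      (∫ u, ρM u ^ n ∂σ)⁻¹ * ∫ u, ρM u ^ n * φ (ρM u / ρB u) ∂σ := by
  have hn' : (n : ℝ) ≠ 0 := Nat.cast_ne_zero.mpr hn.ne'
  set Im := ∫ u, ρM u ^ n ∂σ with hIm
  set IB := ∫ u, ρB u ^ n ∂σ with hIB
  -- the weighted measure
  set w : X → ℝ≥0 := fun u => Real.toNNReal (ρM u ^ n) with hw
  have w_cont : Continuous w := continuous_real_toNNReal.comp (cM.pow n)
  have w_meas : Measurable w := w_cont.measurable
  set μ : Measure X := σ.withDensity (fun u => (w u : ℝ≥0∞)) with hμ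
  haveI : IsFiniteMeasure μ := by
    obtain ⟨uC, -, hC⟩ := isCompact_univ.exists_isMaxOn univ_nonempty w_cont.continuousOn
    have hC : ∀ y, w y ≤ w uC := fun y => hC (mem_univ y)
    have hle : ∫⁻ u, (w u : ℝ≥0∞) ∂σ ≤ (w uC : ℝ≥0∞) * σ univ := by
      calc ∫⁻ u, (w u : ℝ≥0∞) ∂σ ≤ ∫⁻ _, (w uC : ℝ≥0∞) ∂σ :=
            lintegral_mono fun u => ENNReal.coe_le_coe.mpr (hC u)
        _ = (w uC : ℝ≥0∞) * σ univ := lintegral_const _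
    exact isFiniteMeasure_withDensity
      (ne_top_of_le_ne_top (ENNReal.mul_ne_top ENNReal.coe_ne_top (measure_ne_top σ _)) hle)
  have hμuniv : μ univ = ∫⁻ u, (w u : ℝ≥0∞) ∂σ := by
    rw [hμ, withDensity_apply _ MeasurableSet.univ, setLIntegral_univ]
  haveI : NeZero μ := by
    obtain ⟨u₀, -, h₀⟩ := isCompact_univ.exists_isMinOn univ_nonempty w_cont.continuousOn
    have h₀ : ∀ y, w u₀ ≤ w y := fun y => h₀ (mem_univ y)
    have hw0 : (w u₀ : ℝ≥0∞) ≠ 0 := by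
      simp only [hw, ne_eq, ENNReal.coe_eq_zero, Real.toNNReal_eq_zero, not_le]
      exact pow_pos (pM u₀) n
    refine ⟨Measure.measure_univ_ne_zero.mp ?_⟩
    rw [hμuniv]
    intro h
    have : (w u₀ : ℝ≥0∞) * σ univ = 0 := le_antisymm (by
      calc (w u₀ : ℝ≥0∞) * σ univ = ∫⁻ _, (w u₀ : ℝ≥0∞) ∂σ := (lintegral_const _).symm
        _ ≤ ∫⁻ u, (w u : ℝ≥0∞) ∂σ := lintegral_mono fun u => ENNReal.coe_le_coe.mpr (h₀ u)
        _ = 0 := h) zero_le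
    rcases mul_eq_zero.mp this with h' | h'
    · exact hw0 h'
    · exact hσ (Measure.measure_univ_eq_zero.mp h')
  -- integral transfer
  have key : ∀ g : X → ℝ, ∫ u, g u ∂μ = ∫ u, ρM u ^ n * g u ∂σ := by
    intro g
    rw [hμ, integral_withDensity_eq_integral_smul w_meas]
    refine integral_congr_ae (Eventually.of_forall fun u => ?_)
    simp [hw, NNReal.smul_def, Real.coe_toNNReal _ (pow_nonneg (pM u).le n), smul_eq_mul]
  have hμtr : (μ univ).toReal = Im := by
    rw [hμuniv, hIm]
    rw [integral_eq_lintegral_of_nonneg_ae (Eventually.of_forall fun u => pow_nonneg (pM u).le n)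
      (cM.pow n).aestronglyMeasurable]
    rfl
  have hIm_pos : 0 < Im := by
    rw [← hμtr]
    exact ENNReal.toReal_pos (Measure.measure_univ_ne_zero.mpr (NeZero.ne μ)) (measure_ne_top μ _)
  -- the function and convexity set
  set f : X → ℝ := fun u => (ρB u / ρM u) ^ n with hf
  have cf : Continuous f := (cB.div cM fun u => (pM u).ne').pow n
  have pf : ∀ u, 0 < f u := fun u => pow_pos (div_pos (pB u) (pM u)) n
  obtain ⟨ua, -, ha⟩ := isCompact_univ.exists_isMinOn univ_nonempty cf.continuousOn
  have ha : ∀ y, f ua ≤ f y := fun y => ha (mem_univ y)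
  obtain ⟨ub, -, hb⟩ := isCompact_univ.exists_isMaxOn univ_nonempty cf.continuousOn
  have hb : ∀ y, f y ≤ f ub := fun y => hb (mem_univ y)
  have ha0 : 0 < f ua := pf ua
  have hsub : Icc (f ua) (f ub) ⊆ Ioi (0 : ℝ) := fun x hx => lt_of_lt_of_le ha0 hx.1
  set g : ℝ → ℝ := fun t => φ (t ^ (-(1 : ℝ) / n)) with hg
  have hpt : ∀ u, g (f u) = φ (ρM u / ρB u) := by
    intro u
    have hx : 0 < ρB u / ρM u := div_pos (pB u) (pM u)
    have : ((ρB u / ρM u) ^ n : ℝ) ^ (-(1 : ℝ) / n) = ρM u / ρB u := by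
      rw [← Real.rpow_natCast (ρB u / ρM u) n, ← Real.rpow_mul hx.le]
      have : (n : ℝ) * (-(1 : ℝ) / n) = -1 := by field_simp
      rw [this, Real.rpow_neg_one, inv_div]
    simp only [hg, hf, this]
  have hgf_cont : Continuous (fun u => φ (ρM u / ρB u)) := by
    refine hφc.comp_continuous (cM.div cB fun u => (pB u).ne') fun u => ?_
    exact mem_Ici.mpr (div_nonneg (pM u).le (pB u).le)
  have hgc : ContinuousOn g (Icc (f ua) (f ub)) := by
    refine hφc.comp (fun t ht => ?_) fun t ht => mem_Ici.mpr (Real.rpow_nonneg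
      (le_of_lt (hsub ht)) _)
    exact (Real.continuousAt_rpow_const t _ (Or.inl (ne_of_gt (hsub ht)))).continuousWithinAt
  have HJ := (hF.subset hsub (convex_Icc _ _)).map_average_le hgc isClosed_Icc
    (Eventually.of_forall fun u => ⟨ha u, hb u⟩) (continuous_integrable μ cf)
    (by
      have : g ∘ f = fun u => φ (ρM u / ρB u) := funext hpt
      rw [this]
      exact continuous_integrable μ hgf_cont)
  rw [average_eq, average_eq, measureReal_def, hμtr, key, key] at HJ
  have hfInt : ∫ u, ρM u ^ n * f u ∂σ = IB := by
    refine integral_congr_ae (Eventually.of_forall fun u => ?_)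
    simp only [hf, div_pow]
    rw [mul_comm, div_mul_cancel₀ _ (pow_ne_zero n (pM u).ne')]
  rw [hfInt] at HJ
  have hgInt : ∫ u, ρM u ^ n * g (f u) ∂σ = ∫ u, ρM u ^ n * φ (ρM u / ρB u) ∂σ := by
    refine integral_congr_ae (Eventually.of_forall fun u => ?_)
    simp only [hpt]
  rw [hgInt] at HJ
  simpa [hg, smul_eq_mul, inv_mul_eq_div] using HJ

/-- Dual Orlicz-Brunn-Minkowski inequality for the linear Orlicz radial addition. -/
theorem dual_orlicz_brunn_minkowski_linear {n : ℕ} (hn : 0 < n)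
    (φ₁ φ₂ : ℝ → ℝ) (hφ₁ : IsPhi1 φ₁) (hφ₂ : IsPhi1 φ₂)
    (α β : ℝ) (hα : 0 < α) (hβ : 0 < β) (hαβ : 1 ≤ α + β)
    (hF₁ : ConvexOn ℝ (Set.Ioi 0) (fun t : ℝ => φ₁ (t ^ (-(1 : ℝ) / n))))
    (hF₂ : ConvexOn ℝ (Set.Ioi 0) (fun t : ℝ => φ₂ (t ^ (-(1 : ℝ) / n))))
    (K L M : StarBody n)
    (hM : ∀ u : EuclideanSpace ℝ (Fin n), ‖u‖ = 1 →
      α * φ₁ (M.ρ u / K.ρ u) + β * φ₂ (M.ρ u / L.ρ u) = 1) :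
    α * φ₁ ((M.vol / K.vol) ^ ((1 : ℝ) / n)) +
      β * φ₂ ((M.vol / L.vol) ^ ((1 : ℝ) / n)) ≤ 1 := by
  classical
  have hn' : (n : ℝ) ≠ 0 := Nat.cast_ne_zero.mpr hn.ne'
  haveI : Nonempty (Fin n) := Fin.pos_iff_nonempty.mp hn
  haveI : Nonempty (sphere (0 : EuclideanSpace ℝ (Fin n)) 1) :=
    (NormedSpace.sphere_nonempty.mpr zero_le_one).coe_sort
  haveI : IsFiniteMeasure (sphereMeasure n) := by unfold sphereMeasure; infer_instance
  have hσne : sphereMeasure n ≠ 0 := by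
    unfold sphereMeasure
    rw [← Measure.measure_univ_ne_zero, Measure.toSphere_apply_univ]
    have h1 : (volume (ball (0 : EuclideanSpace ℝ (Fin n)) 1)) ≠ 0 :=
      (measure_ball_pos _ _ one_pos).ne'
    have h2 : (Module.finrank ℝ (EuclideanSpace ℝ (Fin n))) = n := finrank_euclideanSpace_fin
    simp [h2, h1, hn.ne']
  have husph : ∀ u : sphere (0 : EuclideanSpace ℝ (Fin n)) 1,
      ‖(u : EuclideanSpace ℝ (Fin n))‖ = 1 := fun u => mem_sphere_zero_iff_norm.mp u.2
  have cM : Continuous (fun u : sphere (0 : EuclideanSpace ℝ (Fin n)) 1 => M.ρ u) :=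
    M.cont.restrict
  have cK : Continuous (fun u : sphere (0 : EuclideanSpace ℝ (Fin n)) 1 => K.ρ u) :=
    K.cont.restrict
  have cL : Continuous (fun u : sphere (0 : EuclideanSpace ℝ (Fin n)) 1 => L.ρ u) :=
    L.cont.restrict
  have pM : ∀ u : sphere (0 : EuclideanSpace ℝ (Fin n)) 1, 0 < M.ρ u :=
    fun u => M.pos u (husph u)
  have pK : ∀ u : sphere (0 : EuclideanSpace ℝ (Fin n)) 1, 0 < K.ρ u :=
    fun u => K.pos u (husph u)
  have pL : ∀ u : sphere (0 : EuclideanSpace ℝ (Fin n)) 1, 0 < L.ρ u :=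
    fun u => L.pos u (husph u)
  set σ := sphereMeasure n
  set Im : ℝ := ∫ u : sphere (0 : EuclideanSpace ℝ (Fin n)) 1, (M.ρ u) ^ n ∂σ with hIm
  set IK : ℝ := ∫ u : sphere (0 : EuclideanSpace ℝ (Fin n)) 1, (K.ρ u) ^ n ∂σ with hIK
  set IL : ℝ := ∫ u : sphere (0 : EuclideanSpace ℝ (Fin n)) 1, (L.ρ u) ^ n ∂σ with hIL
  -- positivity of Im
  have hIm_pos : 0 < Im := by
    obtain ⟨u₀, -, h₀⟩ := isCompact_univ.exists_isMinOn univ_nonempty (cM.pow n).continuousOn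
    have h₀' : ∀ y : sphere (0 : EuclideanSpace ℝ (Fin n)) 1, M.ρ u₀ ^ n ≤ M.ρ y ^ n :=
      fun y => isMinOn_iff.mp h₀ y (mem_univ y)
    have hσu : 0 < (σ univ).toReal :=
      ENNReal.toReal_pos (Measure.measure_univ_ne_zero.mpr hσne) (measure_ne_top σ _)
    calc (0 : ℝ) < (σ univ).toReal * (M.ρ u₀ ^ n) :=
          mul_pos hσu (pow_pos (pM u₀) n)
      _ = ∫ _ : sphere (0 : EuclideanSpace ℝ (Fin n)) 1, (M.ρ u₀ ^ n) ∂σ := by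
          rw [integral_const]; rfl
      _ ≤ Im := integral_mono (integrable_const _)
          (continuous_integrable σ (cM.pow n)) fun y => h₀' y
  have nonnegI : ∀ (f : sphere (0 : EuclideanSpace ℝ (Fin n)) 1 → ℝ),
      (∀ u, 0 < f u) → 0 ≤ ∫ u, f u ^ n ∂σ :=
    fun f hf => integral_nonneg fun u => pow_nonneg (hf u).le n
  -- the two Jensen halves
  have h1 := jensen_half σ hσne hn hφ₁.1 hF₁ cM cK pM pK
  have h2 := jensen_half σ hσne hn hφ₂.1 hF₂ cM cL pM pL
  -- rewrite the goal exponents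
  have hvol : ∀ B : StarBody n, B.vol = (1 / (n : ℝ)) *
      ∫ u : sphere (0 : EuclideanSpace ℝ (Fin n)) 1, (B.ρ u) ^ n ∂σ := fun B => rfl
  have e : ∀ (I : ℝ), 0 ≤ I →
      (M.vol / ((1 / (n : ℝ)) * I)) ^ ((1 : ℝ) / n) = (I / Im) ^ (-(1 : ℝ) / n) := by
    intro I hI
    have hMvol : M.vol = (1 / (n : ℝ)) * Im := hvol M
    rw [hMvol, mul_div_mul_left _ _ (one_div_ne_zero hn')]
    rw [neg_div, Real.rpow_neg (div_nonneg hI hIm_pos.le), ← Real.inv_rpow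
      (div_nonneg hI hIm_pos.le), inv_div]
  have eK : (M.vol / K.vol) ^ ((1 : ℝ) / n) = (IK / Im) ^ (-(1 : ℝ) / n) := by
    rw [hvol K]; exact e IK (nonnegI _ pK)
  have eL : (M.vol / L.vol) ^ ((1 : ℝ) / n) = (IL / Im) ^ (-(1 : ℝ) / n) := by
    rw [hvol L]; exact e IL (nonnegI _ pL)
  rw [eK, eL]
  -- combine
  set J₁ : ℝ := ∫ u : sphere (0 : EuclideanSpace ℝ (Fin n)) 1,
    (M.ρ u) ^ n * φ₁ (M.ρ u / K.ρ u) ∂σ with hJ₁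
  set J₂ : ℝ := ∫ u : sphere (0 : EuclideanSpace ℝ (Fin n)) 1,
    (M.ρ u) ^ n * φ₂ (M.ρ u / L.ρ u) ∂σ with hJ₂
  have i₁ : Integrable (fun u : sphere (0 : EuclideanSpace ℝ (Fin n)) 1 =>
      (M.ρ u) ^ n * φ₁ (M.ρ u / K.ρ u)) σ := by
    refine continuous_integrable σ ((cM.pow n).mul ?_)
    exact hφ₁.1.comp_continuous (cM.div cK fun u => (pK u).ne')
      fun u => mem_Ici.mpr (div_nonneg (pM u).le (pK u).le)
  have i₂ : Integrable (fun u : sphere (0 : EuclideanSpace ℝ (Fin n)) 1 =>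
      (M.ρ u) ^ n * φ₂ (M.ρ u / L.ρ u)) σ := by
    refine continuous_integrable σ ((cM.pow n).mul ?_)
    exact hφ₂.1.comp_continuous (cM.div cL fun u => (pL u).ne')
      fun u => mem_Ici.mpr (div_nonneg (pM u).le (pL u).le)
  have hadd : α * J₁ + β * J₂ = Im := by
    have hA := integral_smul (μ := σ) α
      (fun u : sphere (0 : EuclideanSpace ℝ (Fin n)) 1 => (M.ρ u) ^ n * φ₁ (M.ρ u / K.ρ u))
    have hB := integral_smul (μ := σ) β
      (fun u : sphere (0 : EuclideanSpace ℝ (Fin n)) 1 => (M.ρ u) ^ n * φ₂ (M.ρ u / L.ρ u))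
    simp only [smul_eq_mul] at hA hB
    rw [hJ₁, hJ₂, ← hA, ← hB, ← integral_add (i₁.const_mul α) (i₂.const_mul β), hIm]
    refine integral_congr_ae (Eventually.of_forall fun u => ?_)
    have h := hM u (husph u)
    show α * ((M.ρ u) ^ n * φ₁ (M.ρ u / K.ρ u)) + β * ((M.ρ u) ^ n * φ₂ (M.ρ u / L.ρ u)) =
        (M.ρ u) ^ n
    calc α * ((M.ρ u) ^ n * φ₁ (M.ρ u / K.ρ u)) + β * ((M.ρ u) ^ n * φ₂ (M.ρ u / L.ρ u))
        = (M.ρ u) ^ n * (α * φ₁ (M.ρ u / K.ρ u) + β * φ₂ (M.ρ u / L.ρ u)) := by ring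
      _ = (M.ρ u) ^ n := by rw [h, mul_one]
  calc α * φ₁ ((IK / Im) ^ (-(1 : ℝ) / n)) + β * φ₂ ((IL / Im) ^ (-(1 : ℝ) / n))
      ≤ α * (Im⁻¹ * J₁) + β * (Im⁻¹ * J₂) :=
        add_le_add (mul_le_mul_of_nonneg_left h1 hα.le) (mul_le_mul_of_nonneg_left h2 hβ.le)
    _ = Im⁻¹ * (α * J₁ + β * J₂) := by ring
    _ = Im⁻¹ * Im := by rw [hadd]
    _ = 1 := inv_mul_cancel₀ hIm_pos.ne'
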